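/- Let D be a digraph with arc set A and vertices s, t. If there is a directed walk from s to t traversing every arc of A, then there is a directed path P from s to t in D such that every arc of A not on P belongs to a strongly connected subdigraph of D containing a vertex of P. -/

import Mathlib

/-- `w` is a directed walk from `s` to `t` in the digraph with arc relation `A`. -/
def DWalkFromTo {V : Type*} (A : V → V → Prop) (w : List V) (s t : V) : Prop :=
  w.Chain' A ∧ w.head? = some s ∧ w.getLast? = some t

/-- The list of arcs (steps) traversed by a walk `w`. -/
def steps {V : Type*} (w : List V) : List (V × V) := w.zip w.tail

/-- The subdigraph induced on `S` is strongly connected: any two vertices of `S`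
are joined by a directed walk staying inside `S`. -/
def StrongConnOn {V : Type*} (A : V → V → Prop) (S : Set V) : Prop :=
  ∀ u ∈ S, ∀ v ∈ S, ∃ w : List V, DWalkFromTo A w u v ∧ ∀ x ∈ w, x ∈ S

section Aux
variable {V : Type*} {A : V → V → Prop}

lemma steps_cons_cons (a b : V) (l : List V) : steps (a::b::l) = (a,b) :: steps (b::l) := rfl

lemma steps_nil : steps ([] : List V) = [] := rfl
lemma steps_singleton (a : V) : steps [a] = [] := rfl

lemma mem_steps {u v : V} : ∀ {l : List V}, (u,v) ∈ steps l → u ∈ l ∧ v ∈ l := by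
  intro l
  induction l with
  | nil => intro h; simp [steps_nil] at h
  | cons a t ih =>
    intro h
    cases t with
    | nil => simp [steps_singleton] at h
    | cons b t' =>
      rw [steps_cons_cons] at h
      rcases List.mem_cons.1 h with h | h
      · obtain ⟨rfl, rfl⟩ := Prod.ext_iff.1 h
        constructor <;> simp
      · obtain ⟨h1, h2⟩ := ih h
        exact ⟨List.mem_cons_of_mem _ h1, List.mem_cons_of_mem _ h2⟩

lemma steps_append_cons (x : V) : ∀ (l₁ l₂ : List V),
    steps (l₁ ++ x :: l₂) = steps (l₁ ++ [x]) ++ steps (x :: l₂) := by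
  intro l₁
  induction l₁ with
  | nil => intro l₂; simp [steps_singleton]
  | cons a t ih =>
    intro l₂
    cases t with
    | nil => simp [steps_cons_cons, steps_singleton]
    | cons b t' =>
      have := ih l₂
      simp only [List.cons_append, steps_cons_cons] at *
      rw [this]

lemma chain'_head_reach {l : List V} (hc : l.Chain' A) {a y : V}
    (ha : l.head? = some a) (hy : y ∈ l) : Relation.ReflTransGen A a y := by
  induction l generalizing a with
  | nil => simp at hy
  | cons h t ih =>
    have : a = h := by simpa using ha.symm
    subst this
    rcases List.mem_cons.1 hy with rfl | hy
    · exact .refl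
    · cases t with
      | nil => simp at hy
      | cons h' t' =>
        have hA : A a h' := (List.isChain_cons_cons.1 hc).1
        exact .head hA (ih hc.tail rfl hy)

lemma chain'_reach_getLast {l : List V} (hc : l.Chain' A) {b y : V}
    (hb : l.getLast? = some b) (hy : y ∈ l) : Relation.ReflTransGen A y b := by
  induction l generalizing y with
  | nil => simp at hy
  | cons h t ih =>
    cases t with
    | nil =>
      have : h = b := by simpa using hb
      subst this
      have : y = h := by simpa using hy
      subst this; exact .refl
    | cons h' t' =>
      rw [List.getLast?_cons_cons] at hb
      rcases List.mem_cons.1 hy with rfl | hy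
      · exact .head (List.isChain_cons_cons.1 hc).1 (ih hc.tail hb (List.mem_cons_self))
      · exact ih hc.tail hb hy

lemma dwalk_mem_reach {w : List V} {a b : V} (h : DWalkFromTo A w a b) {y : V} (hy : y ∈ w) :
    Relation.ReflTransGen A a y ∧ Relation.ReflTransGen A y b :=
  ⟨chain'_head_reach h.1 h.2.1 hy, chain'_reach_getLast h.1 h.2.2 hy⟩

lemma dwalk_reach {w : List V} {a b : V} (h : DWalkFromTo A w a b) :
    Relation.ReflTransGen A a b :=
  (dwalk_mem_reach h (List.mem_of_mem_head? h.2.1)).2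

lemma reach_dwalk {a b : V} (h : Relation.ReflTransGen A a b) :
    ∃ w, DWalkFromTo A w a b := by
  induction h with
  | refl => exact ⟨[a], by simp [DWalkFromTo, List.Chain']⟩
  | @tail b' c _ hbc ih =>
    obtain ⟨w, hw⟩ := ih
    refine ⟨w ++ [c], ?_, ?_, by simp⟩
    · refine List.isChain_append.2 ⟨hw.1, List.isChain_singleton _, ?_⟩
      intro x hx y hy
      have hx' : b' = x := by rw [hw.2.2] at hx; simpa using hx
      have hy' : c = y := by simpa using hy
      subst hx'; subst hy'; exact hbc
    · have hne : w ≠ [] := by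
        intro hnil; rw [hnil] at hw; simp [DWalkFromTo] at hw
      rw [List.head?_append]
      rw [hw.2.1]; rfl

lemma dwalk_trans {w1 w2 : List V} {a b c : V}
    (h1 : DWalkFromTo A w1 a b) (h2 : DWalkFromTo A w2 b c) :
    DWalkFromTo A (w1 ++ w2.tail) a c ∧ ∀ y ∈ w1 ++ w2.tail, y ∈ w1 ∨ y ∈ w2 := by
  obtain ⟨hc2, hh2, hl2⟩ := h2
  cases w2 with
  | nil => simp at hh2
  | cons b0 t =>
    have hb : b = b0 := (by simpa using hh2 : b0 = b).symm
    subst hb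
    cases t with
    | nil =>
      have : b = c := by simpa using hl2
      subst this
      simpa using ⟨h1, fun y hy => Or.inl hy⟩
    | cons h' t' =>
      have hA : A b h' := (List.isChain_cons_cons.1 hc2).1
      refine ⟨⟨?_, ?_, ?_⟩, ?_⟩
      · refine List.isChain_append.2 ⟨h1.1, hc2.tail, ?_⟩
        intro x hx y hy
        have hx' : b = x := by rw [h1.2.2] at hx; simpa using hx
        have hy' : h' = y := by simpa using hy
        subst hx'; subst hy'; exact hA
      · rw [List.head?_append, h1.2.1]; rfl
      · show (w1 ++ h' :: t').getLast? = some c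
        rw [List.getLast?_append]
        rw [List.getLast?_cons_cons] at hl2
        rw [hl2]; rfl
      · intro y hy
        rcases List.mem_append.1 hy with hy | hy
        · exact Or.inl hy
        · exact Or.inr (List.mem_cons_of_mem _ hy)

lemma strongConnOn_component (A : V → V → Prop) (u : V) :
    StrongConnOn A {z | Relation.ReflTransGen A u z ∧ Relation.ReflTransGen A z u} := by
  intro z1 hz1 z2 hz2
  obtain ⟨w1, hw1⟩ := reach_dwalk (hz1.2 : Relation.ReflTransGen A z1 u)
  obtain ⟨w2, hw2⟩ := reach_dwalk (hz2.1 : Relation.ReflTransGen A u z2)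
  obtain ⟨hw, hmem⟩ := dwalk_trans hw1 hw2
  refine ⟨_, hw, ?_⟩
  intro y hy
  rcases hmem y hy with hy | hy
  · obtain ⟨h1, h2⟩ := dwalk_mem_reach hw1 hy
    exact ⟨hz1.1.trans h1, h2⟩
  · obtain ⟨h1, h2⟩ := dwalk_mem_reach hw2 hy
    exact ⟨h1, h2.trans hz2.2⟩

lemma exists_dup_split {l : List V} (h : ¬ l.Nodup) :
    ∃ (x : V) (a b c : List V), l = a ++ x :: (b ++ x :: c) := by
  induction l with
  | nil => simp at h
  | cons y t ih =>
    by_cases hy : y ∈ t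
    · obtain ⟨b, c, rfl⟩ := List.append_of_mem hy
      exact ⟨y, [], b, c, rfl⟩
    · have ht : ¬ t.Nodup := by
        intro hn; exact h (List.nodup_cons.2 ⟨hy, hn⟩)
      obtain ⟨x, a, b, c, rfl⟩ := ih ht
      exact ⟨x, y::a, b, c, rfl⟩

lemma erase_loops (A : V → V → Prop) : ∀ (n : ℕ) (w : List V) (s t : V), w.length ≤ n →
    DWalkFromTo A w s t →
    ∃ p : List V, DWalkFromTo A p s t ∧ p.Nodup ∧
      (∀ y ∈ w, ∃ x ∈ p, Relation.ReflTransGen A x y ∧ Relation.ReflTransGen A y x) ∧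
      (∀ u v : V, (u,v) ∈ steps w → (u,v) ∉ steps p → Relation.ReflTransGen A v u) := by
  intro n
  induction n with
  | zero =>
    intro w s t hlen hw
    have : w = [] := List.length_eq_zero_iff.1 (Nat.le_zero.1 hlen)
    subst this; simp [DWalkFromTo] at hw
  | succ n ih =>
    intro w s t hlen hw
    by_cases hnd : w.Nodup
    · refine ⟨w, hw, hnd, fun y hy => ⟨y, hy, .refl, .refl⟩, fun u v h1 h2 => absurd h1 h2⟩
    · obtain ⟨x, a, b, c, rfl⟩ := exists_dup_split hnd
      -- decompose chain
      obtain ⟨hc, hh, hl⟩ := hw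
      obtain ⟨hca, hcx, hlink⟩ := List.isChain_append.1 hc
      have hcx' : (x :: b ++ x :: c).Chain' A := by simpa [List.Chain'] using hcx
      obtain ⟨hcxb, hcxc, hlink2⟩ := List.isChain_append.1 hcx'
      -- the shorter walk
      have hw' : DWalkFromTo A (a ++ x :: c) s t := by
        refine ⟨List.isChain_append.2 ⟨hca, hcxc, ?_⟩, ?_, ?_⟩
        · intro p hp q hq
          exact hlink p hp q (by simpa using hq)
        · rw [List.head?_append] at hh ⊢
          rcases ha : a.head? with _ | y <;> simp [ha] at hh ⊢ <;> simpa using hh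
        · have e1 : (x :: c).getLast? = some ((x :: c).getLast (by simp)) :=
            List.getLast?_eq_getLast _
          rw [List.getLast?_append,
            show (x :: (b ++ x :: c)) = (x :: b) ++ (x :: c) by simp,
            List.getLast?_append, e1] at hl
          rw [List.getLast?_append, e1]
          simpa using hl
      -- the closed walk
      have hcw : DWalkFromTo A ((x :: b) ++ [x]) x x := by
        refine ⟨List.isChain_append.2 ⟨hcxb, List.isChain_singleton _, ?_⟩, ?_, List.getLast?_concat⟩
        · intro p hp q hq
          have hq' : x = q := by simpa using hq
          subst hq'
          exact hlink2 p hp x rfl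
        · cases b <;> rfl
      have hlen' : (a ++ x :: c).length ≤ n := by
        simp at hlen ⊢; omega
      obtain ⟨p, hp, hpnd, hpmem, hpsteps⟩ := ih (a ++ x :: c) s t hlen' hw'
      have hxmem : x ∈ a ++ x :: c := by simp
      refine ⟨p, hp, hpnd, ?_, ?_⟩
      · intro y hy
        have hy' : y ∈ a ∨ y ∈ x :: b ∨ y ∈ x :: c := by
          simp at hy
          rcases hy with hy | hy | hy | hy
          · exact Or.inl hy
          · exact Or.inr (Or.inl (by simp [hy]))
          · exact Or.inr (Or.inl (by simp [hy]))
          · exact Or.inr (Or.inr (by simp [hy]))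
        rcases hy' with hy' | hy' | hy'
        · exact hpmem y (by simp [hy'])
        · -- y on the closed walk
          have hy2 : y ∈ (x :: b) ++ [x] := by
            rcases List.mem_cons.1 hy' with rfl | hy'
            · simp
            · simp [hy']
          obtain ⟨hxy, hyx⟩ := dwalk_mem_reach hcw hy2
          obtain ⟨x', hx', hx'x, hxx'⟩ := hpmem x (by simp)
          exact ⟨x', hx', hx'x.trans hxy, hyx.trans hxx'⟩
        · refine hpmem y ?_
          rcases List.mem_cons.1 hy' with rfl | h
          · simp
          · simp [h]
      · intro u v huv hnp
        have hsteps : steps (a ++ x :: (b ++ x :: c)) =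
            steps (a ++ [x]) ++ (steps ((x :: b) ++ [x]) ++ steps (x :: c)) := by
          rw [steps_append_cons x a (b ++ x :: c)]
          congr 1
          rw [show (x :: (b ++ x :: c)) = (x :: b) ++ (x :: c) from
            List.cons_append.symm]
          rw [steps_append_cons x (x :: b) c]
        rw [hsteps] at huv
        have hsteps' : steps (a ++ x :: c) = steps (a ++ [x]) ++ steps (x :: c) :=
          steps_append_cons x a c
        rcases List.mem_append.1 huv with huv | huv
        · exact hpsteps u v (by rw [hsteps']; exact List.mem_append.2 (Or.inl huv)) hnp
        · rcases List.mem_append.1 huv with huv | huv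
          · obtain ⟨hu, hv⟩ := mem_steps huv
            obtain ⟨_, hvx⟩ := dwalk_mem_reach hcw hv
            obtain ⟨hxu, _⟩ := dwalk_mem_reach hcw hu
            exact hvx.trans hxu
          · exact hpsteps u v (by rw [hsteps']; exact List.mem_append.2 (Or.inr huv)) hnp

end Aux

theorem path_with_scc_of_walkable {V : Type*} (A : V → V → Prop)
    (s t : V) (w : List V) (hw : DWalkFromTo A w s t)
    (hall : ∀ u v, A u v → (u, v) ∈ steps w) :
    ∃ p : List V, DWalkFromTo A p s t ∧ p.Nodup ∧
      ∀ u v, A u v → (u, v) ∉ steps p →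
        ∃ S : Set V, u ∈ S ∧ v ∈ S ∧ StrongConnOn A S ∧ ∃ x ∈ S, x ∈ p := by
  obtain ⟨p, hp, hnd, hmem, hsteps⟩ := erase_loops A w.length w s t le_rfl hw
  refine ⟨p, hp, hnd, ?_⟩
  intro u v hA hnp
  have huw : (u, v) ∈ steps w := hall u v hA
  have hvu : Relation.ReflTransGen A v u := hsteps u v huw hnp
  have huv : Relation.ReflTransGen A u v := .single hA
  obtain ⟨hu, _⟩ := mem_steps huw
  obtain ⟨x, hxp, hxu, hux⟩ := hmem u hu
  refine ⟨{z | Relation.ReflTransGen A u z ∧ Relation.ReflTransGen A z u},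
    ⟨.refl, .refl⟩, ⟨huv, hvu⟩, strongConnOn_component A u, x, ⟨hux, hxu⟩, hxp⟩
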